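/- Let n ≥ 3, 3 ≤ k ≤ n and m ≥ 1 be integers, and for each r ∈ {1,…,m} let (h^r_{ij})_{1≤i,j≤n} be a symmetric real n×n matrix. Then Σ_{r=1}^{m} [ Σ_{1≤i<j≤n} ( h^r_{ii}h^r_{jj} − (h^r_{ij})² ) − (1/(k−1)) Σ_{i=2}^{k} ( h^r_{11}h^r_{ii} − (h^r_{1i})² ) ] ≤ ((n−2)/(2(n−1))) · Σ_{r=1}^{m} ( Σ_{i=1}^{n} h^r_{ii} )². -/
import Mathlib
open Finset


-- cleared-denominator weighted Cauchy core
lemma core_key (p q az t R A1 A2 : ℝ) (hp : 0 ≤ p) (hq : 2 ≤ q)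
    (h1 : t^2 ≤ q*A1) (h2 : R^2 ≤ p*A2) (hA2 : 0 ≤ A2) :
    (az+t+R)^2*q ≤ (p+q)*(q*(az^2+A1+A2)+2*az*t) := by
  rcases hp.eq_or_lt with h|h
  · obtain rfl : p = 0 := h.symm
    have hR : R = 0 := by nlinarith [sq_nonneg R]
    subst hR
    have hq' : (0:ℝ) ≤ q := by linarith
    nlinarith [mul_nonneg hq' (by linarith : (0:ℝ) ≤ q*A1 - t^2),
      mul_nonneg hq' (mul_nonneg (by linarith : (0:ℝ) ≤ q-1) (sq_nonneg az)),
      mul_nonneg hq' (mul_nonneg hq' hA2)]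
  · have hD : 0 ≤ ((p+q)*(q*(az^2+A1+A2)+2*az*t) - (az+t+R)^2*q) * p := by
      nlinarith [sq_nonneg (p*(az+t) - q*R),
        mul_nonneg (mul_nonneg (by linarith : (0:ℝ) ≤ q) (by linarith : (0:ℝ) ≤ p+q)) (by linarith : (0:ℝ) ≤ p*A2 - R^2),
        mul_nonneg (mul_nonneg h.le (by linarith : (0:ℝ) ≤ p+q)) (mul_nonneg (by linarith : (0:ℝ) ≤ q-1) (sq_nonneg az)),
        mul_nonneg (mul_nonneg h.le (by linarith : (0:ℝ) ≤ p+q)) (by linarith : (0:ℝ) ≤ q*A1 - t^2)]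
    have h0 : 0 * p ≤ ((p+q)*(q*(az^2+A1+A2)+2*az*t) - (az+t+R)^2*q) * p := by linarith
    have := le_of_mul_le_mul_right h0 h
    linarith

lemma final_scalar (p q Qh Q0 az t R A1 A2 : ℝ) (hp : 0 ≤ p) (hq : 2 ≤ q)
    (hQ0 : 0 ≤ Q0) (hQ : Q0 ≤ Qh) (h1 : t^2 ≤ q*A1) (h2 : R^2 ≤ p*A2) (hA2 : 0 ≤ A2) :
    ((az+t+R)^2 - (az^2+A1+A2))/2 - Qh - 1/q*(az*t - Q0)
      ≤ (p+q-1)/(2*(p+q))*(az+t+R)^2 := by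
  have hq0 : 0 < q := by linarith
  have hpq : 0 < p + q := by linarith
  have key := core_key p q az t R A1 A2 hp hq h1 h2 hA2
  have hQQ : 0 ≤ q*Qh - Q0 := by nlinarith
  have main : 0 ≤ ((p+q)*(q*(az^2+A1+A2)+2*az*t) - (az+t+R)^2*q) + 2*(p+q)*(q*Qh - Q0) := by
    have := mul_nonneg (by linarith : (0:ℝ) ≤ 2*(p+q)) hQQ
    linarith
  rw [← sub_nonneg]
  have heq : (p+q-1)/(2*(p+q))*(az+t+R)^2 - (((az+t+R)^2 - (az^2+A1+A2))/2 - Qh - 1/q*(az*t - Q0))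
      = (((p+q)*(q*(az^2+A1+A2)+2*az*t) - (az+t+R)^2*q) + 2*(p+q)*(q*Qh - Q0)) / (2*(p+q)*q) := by
    field_simp
    ring
  rw [heq]
  exact div_nonneg main (by positivity)

lemma split_sum' (n k : ℕ) (hk : 3 ≤ k) (hkn : k ≤ n) (z : Fin n) (hz : (z:ℕ) = 0)
    (f : Fin n → ℝ) :
    ∑ i : Fin n, f i = f z + (∑ i : Fin n, if 1 ≤ (i:ℕ) ∧ (i:ℕ) < k then f i else 0)
      + (∑ i : Fin n, if k ≤ (i:ℕ) then f i else 0) := by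
  have key : ∀ i : Fin n, f i = (if z = i then f i else 0)
      + (if 1 ≤ (i:ℕ) ∧ (i:ℕ) < k then f i else 0) + (if k ≤ (i:ℕ) then f i else 0) := by
    intro i
    have hzi : (z = i) ↔ (i:ℕ) = 0 := by
      constructor
      · rintro rfl; exact hz
      · intro h; exact Fin.ext (by omega)
    by_cases h0 : (i:ℕ) = 0
    · rw [if_pos (hzi.mpr h0), if_neg (by omega), if_neg (by omega)]; ring
    · rw [if_neg (fun hh => h0 (hzi.mp hh))]
      by_cases h1 : (i:ℕ) < k
      · rw [if_pos ⟨by omega, h1⟩, if_neg (by omega)]; ring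
      · rw [if_neg (by omega), if_pos (by omega)]; ring
  calc ∑ i : Fin n, f i = ∑ i : Fin n, ((if z = i then f i else 0)
      + (if 1 ≤ (i:ℕ) ∧ (i:ℕ) < k then f i else 0) + (if k ≤ (i:ℕ) then f i else 0)) :=
        Finset.sum_congr rfl fun i _ => key i
    _ = _ := by
        rw [Finset.sum_add_distrib, Finset.sum_add_distrib, Finset.sum_ite_eq]
        simp

lemma pair_split (n : ℕ) (a : Fin n → ℝ) :
    (∑ i : Fin n, a i)^2 = 2 * (∑ i : Fin n, ∑ j : Fin n, if i < j then a i * a j else 0)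
      + ∑ i : Fin n, (a i)^2 := by
  have tri : ∀ i j : Fin n, a i * a j = (if i < j then a i * a j else 0)
      + (if j < i then a i * a j else 0) + (if i = j then a i * a j else 0) := by
    intro i j
    rcases lt_trichotomy i j with h|h|h
    · rw [if_pos h, if_neg (asymm h), if_neg (ne_of_lt h)]; ring
    · subst h; simp
    · rw [if_neg (asymm h), if_pos h, if_neg (ne_of_gt h)]; ring
  have e1 : (∑ i : Fin n, a i)^2 = ∑ i : Fin n, ∑ j : Fin n, a i * a j := by
    rw [sq, Finset.sum_mul_sum]
  have e2 : (∑ i : Fin n, ∑ j : Fin n, if j < i then a i * a j else 0)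
      = ∑ i : Fin n, ∑ j : Fin n, if i < j then a i * a j else 0 := by
    rw [Finset.sum_comm]
    refine Finset.sum_congr rfl fun i _ => Finset.sum_congr rfl fun j _ => ?_
    split_ifs <;> ring
  have e3 : (∑ i : Fin n, ∑ j : Fin n, if i = j then a i * a j else 0)
      = ∑ i : Fin n, (a i)^2 := by
    refine Finset.sum_congr rfl fun i _ => ?_
    rw [Finset.sum_ite_eq]
    simp [sq]
  calc (∑ i : Fin n, a i)^2 = ∑ i : Fin n, ∑ j : Fin n, a i * a j := e1
    _ = ∑ i : Fin n, ∑ j : Fin n, ((if i < j then a i * a j else 0)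
        + (if j < i then a i * a j else 0) + (if i = j then a i * a j else 0)) :=
      Finset.sum_congr rfl fun i _ => Finset.sum_congr rfl fun j _ => tri i j
    _ = _ := by
      simp only [Finset.sum_add_distrib]
      rw [e2, e3]; ring

lemma per_r (n k : ℕ) (hn : 3 ≤ n) (hk : 3 ≤ k) (hkn : k ≤ n)
    (b : Fin n → Fin n → ℝ) (z : Fin n) (hz : (z:ℕ) = 0) :
    (∑ i : Fin n, ∑ j : Fin n, if i < j then b i i * b j j - (b i j)^2 else 0)
      - (1 / ((k:ℝ)-1)) *
        (∑ i : Fin n, if 1 ≤ (i:ℕ) ∧ (i:ℕ) < k then b z z * b i i - (b z i)^2 else 0)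
    ≤ ((n:ℝ)-2)/(2*((n:ℝ)-1)) * (∑ i : Fin n, b i i)^2 := by
  set a : Fin n → ℝ := fun i => b i i with ha
  set t : ℝ := ∑ i : Fin n, if 1 ≤ (i:ℕ) ∧ (i:ℕ) < k then a i else 0 with hta
  set R : ℝ := ∑ i : Fin n, if k ≤ (i:ℕ) then a i else 0 with hRa
  set A1 : ℝ := ∑ i : Fin n, if 1 ≤ (i:ℕ) ∧ (i:ℕ) < k then (a i)^2 else 0 with hA1a
  set A2 : ℝ := ∑ i : Fin n, if k ≤ (i:ℕ) then (a i)^2 else 0 with hA2a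
  set Qh : ℝ := ∑ i : Fin n, ∑ j : Fin n, if i < j then (b i j)^2 else 0 with hQha
  set Q0 : ℝ := ∑ i : Fin n, if 1 ≤ (i:ℕ) ∧ (i:ℕ) < k then (b z i)^2 else 0 with hQ0a
  -- first double sum splits
  have e_first : (∑ i : Fin n, ∑ j : Fin n, if i < j then b i i * b j j - (b i j)^2 else 0)
      = (∑ i : Fin n, ∑ j : Fin n, if i < j then a i * a j else 0) - Qh := by
    rw [hQha, ← Finset.sum_sub_distrib]
    refine Finset.sum_congr rfl fun i _ => ?_
    rw [← Finset.sum_sub_distrib]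
    refine Finset.sum_congr rfl fun j _ => ?_
    split_ifs <;> ring
  have e_inner : (∑ i : Fin n, if 1 ≤ (i:ℕ) ∧ (i:ℕ) < k then b z z * b i i - (b z i)^2 else 0)
      = a z * t - Q0 := by
    rw [hta, Finset.mul_sum, hQ0a, ← Finset.sum_sub_distrib]
    refine Finset.sum_congr rfl fun i _ => ?_
    split_ifs <;> ring
  -- sum of diagonal decompositions
  have eS : (∑ i : Fin n, a i) = a z + t + R :=
    split_sum' n k hk hkn z hz a
  have eW : (∑ i : Fin n, (a i)^2) = (a z)^2 + A1 + A2 :=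
    split_sum' n k hk hkn z hz (fun i => (a i)^2)
  have eP : (∑ i : Fin n, ∑ j : Fin n, if i < j then a i * a j else 0)
      = ((a z + t + R)^2 - ((a z)^2 + A1 + A2))/2 := by
    have := pair_split n a
    rw [eS, eW] at this
    linarith
  -- cardinalities
  have hI : (univ.filter fun i : Fin n => 1 ≤ (i:ℕ) ∧ (i:ℕ) < k)
      = Finset.attachFin (Finset.Ico 1 k) (fun m hm => lt_of_lt_of_le (Finset.mem_Ico.mp hm).2 hkn) := by
    ext i
    simp [Finset.mem_attachFin, Finset.mem_Ico]
  have hIcard : (univ.filter fun i : Fin n => 1 ≤ (i:ℕ) ∧ (i:ℕ) < k).card = k - 1 := by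
    rw [hI, Finset.card_attachFin, Nat.card_Ico]
  have hJ : (univ.filter fun i : Fin n => k ≤ (i:ℕ))
      = Finset.attachFin (Finset.Ico k n) (fun m hm => (Finset.mem_Ico.mp hm).2) := by
    ext i
    simp [Finset.mem_attachFin, Finset.mem_Ico, i.isLt]
  have hJcard : (univ.filter fun i : Fin n => k ≤ (i:ℕ)).card = n - k := by
    rw [hJ, Finset.card_attachFin, Nat.card_Ico]
  -- Cauchy-Schwarz bounds
  have ht2 : t^2 ≤ ((k:ℝ)-1) * A1 := by
    have hc := sq_sum_le_card_mul_sum_sq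
      (s := univ.filter fun i : Fin n => 1 ≤ (i:ℕ) ∧ (i:ℕ) < k) (f := a)
    rw [Finset.sum_filter, Finset.sum_filter, hIcard] at hc
    calc t^2 ≤ ((k-1 : ℕ):ℝ) * A1 := hc
      _ = ((k:ℝ)-1) * A1 := by
          congr 1
          push_cast [Nat.cast_sub (by omega : 1 ≤ k)]
          ring
  have hR2 : R^2 ≤ ((n:ℝ)-(k:ℝ)) * A2 := by
    have hc := sq_sum_le_card_mul_sum_sq
      (s := univ.filter fun i : Fin n => k ≤ (i:ℕ)) (f := a)
    rw [Finset.sum_filter, Finset.sum_filter, hJcard] at hc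
    calc R^2 ≤ ((n-k : ℕ):ℝ) * A2 := hc
      _ = ((n:ℝ)-(k:ℝ)) * A2 := by
          congr 1
          push_cast [Nat.cast_sub hkn]
          ring
  -- Q facts
  have hQ0 : 0 ≤ Q0 := Finset.sum_nonneg fun i _ => by split_ifs <;> positivity
  have hA2 : 0 ≤ A2 := Finset.sum_nonneg fun i _ => by split_ifs <;> positivity
  have hQ : Q0 ≤ Qh := by
    have step1 : Q0 ≤ ∑ j : Fin n, if z < j then (b z j)^2 else 0 := by
      refine Finset.sum_le_sum fun j _ => ?_
      by_cases hc : 1 ≤ (j:ℕ) ∧ (j:ℕ) < k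
      · rw [if_pos hc, if_pos (show z < j by rw [Fin.lt_def, hz]; omega)]
      · rw [if_neg hc]
        split_ifs <;> positivity
    have step2 : (∑ j : Fin n, if z < j then (b z j)^2 else 0) ≤ Qh :=
      Finset.single_le_sum (f := fun i => ∑ j : Fin n, if i < j then (b i j)^2 else 0)
        (fun i _ => Finset.sum_nonneg fun j _ => by split_ifs <;> positivity)
        (Finset.mem_univ z)
    linarith
  -- assemble
  rw [e_first, e_inner, eP, eS]
  have hfs := final_scalar ((n:ℝ)-(k:ℝ)) ((k:ℝ)-1) Qh Q0 (a z) t R A1 A2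
    (by
      have h1 : (k:ℝ) ≤ (n:ℝ) := by exact_mod_cast hkn
      linarith)
    (by
      have h1 : (3:ℝ) ≤ (k:ℝ) := by exact_mod_cast hk
      linarith)
    hQ0 hQ ht2 hR2 hA2
  calc ((a z + t + R)^2 - ((a z)^2 + A1 + A2))/2 - Qh - 1/((k:ℝ)-1)*(a z * t - Q0)
      ≤ (((n:ℝ)-(k:ℝ))+((k:ℝ)-1)-1)/(2*(((n:ℝ)-(k:ℝ))+((k:ℝ)-1)))*(a z + t + R)^2 := hfs
    _ = ((n:ℝ)-2)/(2*((n:ℝ)-1))*(a z + t + R)^2 := by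
        rw [show ((n:ℝ)-(k:ℝ))+((k:ℝ)-1) = (n:ℝ)-1 by ring]
        congr 1
        ring

theorem stmt_5 (n k m : ℕ) (hn : 3 ≤ n) (hk : 3 ≤ k) (hkn : k ≤ n) (hm : 1 ≤ m)
    (h : Fin m → Fin n → Fin n → ℝ)
    (hsymm : ∀ r i j, h r i j = h r j i) :
    ∑ r : Fin m,
        ((∑ i : Fin n, ∑ j : Fin n, if i < j then h r i i * h r j j - (h r i j) ^ 2 else 0)
          - (1 / ((k : ℝ) - 1)) *
            (∑ i : Fin n, if 1 ≤ (i : ℕ) ∧ (i : ℕ) < k then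
                h r ⟨0, by omega⟩ ⟨0, by omega⟩ * h r i i - (h r ⟨0, by omega⟩ i) ^ 2
              else 0))
      ≤ ((n : ℝ) - 2) / (2 * ((n : ℝ) - 1)) * ∑ r : Fin m, (∑ i : Fin n, h r i i) ^ 2 := by
  rw [Finset.mul_sum]
  exact Finset.sum_le_sum fun r _ => per_r n k hn hk hkn (h r) ⟨0, by omega⟩ rfl
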